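/- For all integers n ≥ 1 and m ≥ 1, the inequality √(π/(2m)) ≤ 1/(2√m) + √(log(2n√m)/m) holds; equivalently, the condition n√m ≥ (1/2)·exp(((√(2π) − 1)/2)²) is satisfied for all n, m ≥ 1. Consequently, the bias bound −√(π/(2m)) ≤ E[β̂(η̂_{1:n})] − β* ≤ 0 is tighter than the bound |E[β̂(η̂_{1:n})] − β*| ≤ 1/(2√m) + √(log(2n√m)/m) for all n, m ≥ 1. -/

import Mathlib

theorem new_bias_bound_tighter_than_existing :
    ∀ n m : ℕ, 1 ≤ n → 1 ≤ m →
      (Real.sqrt (Real.pi / (2 * (m : ℝ))) ≤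
        1 / (2 * Real.sqrt (m : ℝ)) +
          Real.sqrt (Real.log (2 * (n : ℝ) * Real.sqrt (m : ℝ)) / (m : ℝ))) ∧
      ((1 / 2 : ℝ) * Real.exp (((Real.sqrt (2 * Real.pi) - 1) / 2) ^ 2) ≤
        (n : ℝ) * Real.sqrt (m : ℝ)) ∧
      (∀ b : ℝ, -Real.sqrt (Real.pi / (2 * (m : ℝ))) ≤ b → b ≤ 0 →
        |b| ≤ 1 / (2 * Real.sqrt (m : ℝ)) +
          Real.sqrt (Real.log (2 * (n : ℝ) * Real.sqrt (m : ℝ)) / (m : ℝ))) := by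
  intro n m hn hm
  have hmr : (1 : ℝ) ≤ (m : ℝ) := by exact_mod_cast hm
  have hnr : (1 : ℝ) ≤ (n : ℝ) := by exact_mod_cast hn
  have hm0 : (0 : ℝ) < (m : ℝ) := lt_of_lt_of_le one_pos hmr
  set s := Real.sqrt (m : ℝ) with hs_def
  have hs1 : (1 : ℝ) ≤ s := by
    rw [hs_def, show (1:ℝ) = Real.sqrt 1 by simp]
    exact Real.sqrt_le_sqrt hmr
  have hs0 : (0 : ℝ) < s := lt_of_lt_of_le one_pos hs1
  have hs2 : s ^ 2 = (m : ℝ) := Real.sq_sqrt hm0.le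
  set c := (Real.sqrt (2 * Real.pi) - 1) / 2 with hc_def
  have hsqrt2pi_ge : (1 : ℝ) ≤ Real.sqrt (2 * Real.pi) := by
    rw [show (1:ℝ) = Real.sqrt 1 by simp]
    apply Real.sqrt_le_sqrt
    nlinarith [Real.pi_gt_three]
  have hc0 : 0 ≤ c := by rw [hc_def]; linarith
  have hsqrt2pi_le : Real.sqrt (2 * Real.pi) ≤ 2.51 := by
    rw [show (2.51 : ℝ) = Real.sqrt (2.51 ^ 2) from (Real.sqrt_sq (by norm_num)).symm]
    apply Real.sqrt_le_sqrt
    nlinarith [Real.pi_lt_d2]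
  have hcle : c ≤ 0.755 := by rw [hc_def]; linarith
  have hc2 : c ^ 2 ≤ Real.log 2 := by
    have h9 := Real.log_two_gt_d9
    nlinarith
  -- part 2
  have hexp : Real.exp (c ^ 2) ≤ 2 := by
    calc Real.exp (c ^ 2) ≤ Real.exp (Real.log 2) := Real.exp_le_exp.mpr hc2
    _ = 2 := Real.exp_log (by norm_num)
  have hns : (1 : ℝ) ≤ (n : ℝ) * s := by nlinarith
  have part2 : (1 / 2 : ℝ) * Real.exp (c ^ 2) ≤ (n : ℝ) * s := by linarith
  -- log bound
  have hpos : (0 : ℝ) < 2 * (n : ℝ) * s := by nlinarith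
  have hlog : c ^ 2 ≤ Real.log (2 * (n : ℝ) * s) := by
    rw [Real.le_log_iff_exp_le hpos]
    linarith
  have hlog0 : 0 ≤ Real.log (2 * (n : ℝ) * s) := le_trans (sq_nonneg c) hlog
  -- part 1
  have hL : Real.sqrt (Real.pi / (2 * (m : ℝ))) = Real.sqrt (2 * Real.pi) / (2 * s) := by
    have h1 : Real.pi / (2 * (m : ℝ)) = (2 * Real.pi) / (2 * s) ^ 2 := by
      rw [mul_pow, hs2]; ring
    rw [h1, Real.sqrt_div (by positivity), Real.sqrt_sq (by positivity)]
  have hR : c / s ≤ Real.sqrt (Real.log (2 * (n : ℝ) * s) / (m : ℝ)) := by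
    rw [Real.sqrt_div hlog0, ← hs_def]
    have : c = Real.sqrt (c ^ 2) := (Real.sqrt_sq hc0).symm
    rw [this]
    gcongr
  have part1 : Real.sqrt (Real.pi / (2 * (m : ℝ))) ≤
      1 / (2 * s) + Real.sqrt (Real.log (2 * (n : ℝ) * s) / (m : ℝ)) := by
    have heq : Real.sqrt (2 * Real.pi) / (2 * s) = 1 / (2 * s) + c / s := by
      field_simp [hc_def]
      linarith
    rw [hL, heq]
    linarith
  refine ⟨part1, part2, ?_⟩
  intro b hb1 hb2
  rw [abs_of_nonpos hb2]
  linarith
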